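/- Suppose the weight functions of two singular hermitian metrics on isomorphic line bundles over Z \ B differ, in local coordinates adapted to a smooth hypersurface B = {z¹ = 0}, by χ = β log|z¹|² + 2Re(a(z')/z¹) where a is holomorphic on B ∩ U. If χ is bounded above by C(1 + |log|z¹||) near every point of B (i.e. -log of the metric has at worst logarithmic poles along B), then a ≡ 0; consequently the associated current T_v vanishes and the Chern current difference equals β[B]. -/

import Mathlib

open MeasureTheory

/-- The unit polydisk. -/
def pd15 (m : ℕ) : Set (Fin m → ℂ) := {z | ∀ i, ‖z i‖ < 1}

/-- Suppose the weight functions of two singular hermitian metrics on isomorphic line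
    bundles over Z \ B differ, in coordinates (z¹, z') adapted to the smooth
    hypersurface B = {z¹ = 0}, by χ(z¹, z') = β log|z¹|² + 2 Re(a(z')/z¹) with a
    holomorphic.  If χ has at worst logarithmic poles along B, i.e. for every z' there
    are C > 0 and ε > 0 with |χ(z¹, z')| ≤ C(1 - log|z¹|) for 0 < |z¹| < ε, then
    a ≡ 0; consequently the associated current T_v vanishes (its density a is zero)
    and the Chern current difference equals β[B]. -/
theorem stmt15 (m : ℕ) (β : ℝ) (a : (Fin m → ℂ) → ℂ)
    (ha : DifferentiableOn ℂ a (pd15 m))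
    (hgrowth : ∀ z' ∈ pd15 m, ∃ C > (0 : ℝ), ∃ ε > (0 : ℝ), ∀ w : ℂ,
      w ≠ 0 → ‖w‖ < ε →
        |β * Real.log (‖w‖ ^ 2) + 2 * (a z' / w).re| ≤ C * (1 - Real.log ‖w‖)) :
    (∀ z' ∈ pd15 m, a z' = 0) ∧
    -- consequently the current T_v (with density a along B) vanishes
    (∀ ψ : (Fin m → ℂ) → ℂ, (∫ z' in pd15 m, a z' * ψ z') = 0) := by
  have hmain : ∀ z' ∈ pd15 m, a z' = 0 := by
    intro z' hz'
    obtain ⟨C, hC, ε, hε, hbd⟩ := hgrowth z' hz'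
    by_contra hc
    set c : ℂ := a z' with hcdef
    have hcn : (0 : ℝ) < ‖c‖ := norm_pos_iff.mpr hc
    set K : ℝ := C + 2 * |β| with hK
    have hK0 : 0 < K := by positivity
    -- for small positive t, ‖c‖ ≤ t * K * (1 - log t)
    have key : ∀ t : ℝ, 0 < t → t < ε → t < 1 → ‖c‖ ≤ t * (K * (1 - Real.log t)) := by
      intro t ht htε ht1
      set w : ℂ := (t / ‖c‖ : ℝ) * c with hw
      have hw0 : w ≠ 0 := by
        simp only [hw, mul_ne_zero_iff]
        constructor
        · exact_mod_cast (div_pos ht hcn).ne'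
        · exact hc
      have hwn : ‖w‖ = t := by
        rw [hw, norm_mul, Complex.norm_real, Real.norm_eq_abs,
          abs_of_pos (div_pos ht hcn), div_mul_cancel₀ _ hcn.ne']
      have hdiv : c / w = (‖c‖ / t : ℝ) := by
        rw [hw]
        field_simp [hc]
        rw [one_div, ← Complex.ofReal_inv, inv_div]
      have hre : (c / w).re = ‖c‖ / t := by rw [hdiv, Complex.ofReal_re]
      have h := hbd w hw0 (by rw [hwn]; exact htε)
      rw [hwn, hre] at h
      have hlt : Real.log t < 0 := Real.log_neg ht ht1
      have h1 : 2 * (‖c‖ / t) ≤ |β * Real.log (t ^ 2)| + |β * Real.log (t ^ 2) + 2 * (‖c‖ / t)| := by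
        calc 2 * (‖c‖ / t) ≤ |2 * (‖c‖ / t)| := le_abs_self _
          _ = |(β * Real.log (t ^ 2) + 2 * (‖c‖ / t)) - β * Real.log (t ^ 2)| := by ring_nf
          _ ≤ |β * Real.log (t ^ 2) + 2 * (‖c‖ / t)| + |β * Real.log (t ^ 2)| := abs_sub _ _
          _ = _ := by ring
      have hlog2 : |β * Real.log (t ^ 2)| ≤ 2 * |β| * (1 - Real.log t) := by
        rw [abs_mul, Real.log_pow]
        have : |(2 : ℕ) * Real.log t| = 2 * (-Real.log t) := by
          rw [abs_of_nonpos (by push_cast; nlinarith)]; push_cast; ring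
        rw [this]
        nlinarith [abs_nonneg β]
      have h3 : 2 * (‖c‖ / t) ≤ K * (1 - Real.log t) := by
        rw [hK]; nlinarith
      have h4 : ‖c‖ / t * t = ‖c‖ := div_mul_cancel₀ _ ht.ne'
      nlinarith [mul_le_mul_of_nonneg_right h3 ht.le]
    -- take the limit t → 0⁺
    have hlim : Filter.Tendsto (fun t : ℝ => t * (K * (1 - Real.log t)))
        (nhdsWithin 0 (Set.Ioi 0)) (nhds 0) := by
      have h1 : Filter.Tendsto (fun t : ℝ => Real.log t * t) (nhdsWithin 0 (Set.Ioi 0)) (nhds 0) := by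
        simpa using tendsto_log_mul_rpow_nhdsGT_zero (zero_lt_one)
      have h2 : Filter.Tendsto (fun t : ℝ => t) (nhdsWithin 0 (Set.Ioi 0)) (nhds 0) :=
        tendsto_nhdsWithin_of_tendsto_nhds Filter.tendsto_id
      have := ((h2.sub h1).const_mul K)
      simpa [mul_sub, sub_mul, mul_comm, mul_left_comm, mul_assoc] using this
    have hev : ∀ᶠ t in nhdsWithin (0:ℝ) (Set.Ioi 0), ‖c‖ ≤ t * (K * (1 - Real.log t)) := by
      have hmem : Set.Ioo (0:ℝ) (min ε 1) ∈ nhdsWithin (0:ℝ) (Set.Ioi 0) := by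
        apply Ioo_mem_nhdsGT_of_mem
        exact ⟨le_refl _, lt_min hε one_pos⟩
      filter_upwards [hmem] with t ht
      exact key t ht.1 (lt_of_lt_of_le ht.2 (min_le_left _ _)) (lt_of_lt_of_le ht.2 (min_le_right _ _))
    have : ‖c‖ ≤ 0 := ge_of_tendsto hlim hev
    exact absurd this (not_le.mpr hcn)
  refine ⟨hmain, fun ψ => ?_⟩
  apply setIntegral_eq_zero_of_forall_eq_zero
  intro z' hz'
  rw [hmain z' hz', zero_mul]
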